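/- In the first-order Gaussian ISI channel with BPSK mapping (bit b ↦ 1−2b), where P(y_i | x_{i-1}, x_i) is the Gaussian density N(h₀(1−2x_i) + h₁(1−2x_{i-1}), σ²) evaluated at y_i, the pairwise correction term satisfies Rel({i,i+1}) − Rel({i}) − Rel({i+1}) = (4 h₀ h₁ / σ²) · (2·𝟙[x*_i = x*_{i+1}] − 1), for any 1 ≤ i ≤ N−1 with i+1 ≤ N−1 or appropriate boundary handling; in particular the correction term does not depend on the received values y. -/
import Mathlib


/-- Gaussian density with mean `μ` and variance `σ²`, evaluated at `y`. -/
noncomputable def gpdf (σ μ y : ℝ) : ℝ :=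
  (1 / Real.sqrt (2 * Real.pi * σ ^ 2)) * Real.exp (-(y - μ) ^ 2 / (2 * σ ^ 2))

/-- BPSK mapping of a bit: `b ↦ 1 - 2b`. -/
def bval (b : Bool) : ℝ := if b then 1 else 0

/-- Flip the bits of `x` at the positions in `S`. -/
def flipSeq (S : Finset ℕ) (x : ℕ → Bool) : ℕ → Bool :=
  fun i => if i ∈ S then !(x i) else x i

/-- `ln P(y_i | x_{i-1}, x_i)` for the first-order Gaussian ISI channel with BPSK. -/
noncomputable def gaussLL (h0 h1 σ : ℝ) (y : ℕ → ℝ) (i : ℕ) (bprev b : Bool) : ℝ :=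
  Real.log (gpdf σ (h0 * (1 - 2 * bval b) + h1 * (1 - 2 * bval bprev)) (y i))

/-- First-order weight function for the Gaussian ISI channel. -/
noncomputable def Lam1 (N : ℕ) (h0 h1 σ : ℝ) (y : ℕ → ℝ) (x : ℕ → Bool) : ℝ :=
  ∑ i ∈ Finset.Icc 1 N, gaussLL h0 h1 σ y i (x (i - 1)) (x i)

/-- Sequence reliability. -/
noncomputable def Rel1 (N : ℕ) (h0 h1 σ : ℝ) (y : ℕ → ℝ) (xs : ℕ → Bool)
    (S : Finset ℕ) : ℝ :=
  Lam1 N h0 h1 σ y xs - Lam1 N h0 h1 σ y (flipSeq S xs)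

lemma gaussLL_eq (h0 h1 σ : ℝ) (hσ : 0 < σ) (y : ℕ → ℝ) (i : ℕ) (p c : Bool) :
    gaussLL h0 h1 σ y i p c = Real.log (1 / Real.sqrt (2 * Real.pi * σ ^ 2))
      - (y i - (h0 * (1 - 2 * bval c) + h1 * (1 - 2 * bval p))) ^ 2 / (2 * σ ^ 2) := by
  have hpos : 0 < 2 * Real.pi * σ ^ 2 :=
    mul_pos (mul_pos two_pos Real.pi_pos) (pow_pos hσ 2)
  have hs : (0:ℝ) < Real.sqrt (2 * Real.pi * σ ^ 2) := Real.sqrt_pos.mpr hpos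
  unfold gaussLL gpdf
  rw [Real.log_mul (by positivity) (Real.exp_ne_zero _), Real.log_exp]
  ring

/-- Lemma 3: in the first-order Gaussian ISI channel, the pairwise correction term
equals `(4 h₀ h₁ / σ²)(2·𝟙[x*_i = x*_{i+1}] − 1)`, independent of `y`. -/
theorem pairwise_correction (N i : ℕ) (h0 h1 σ : ℝ) (hσ : 0 < σ)
    (y : ℕ → ℝ) (xs : ℕ → Bool) (hi : 1 ≤ i) (hiN : i + 1 ≤ N) :
    Rel1 N h0 h1 σ y xs {i, i + 1} - Rel1 N h0 h1 σ y xs {i} -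
        Rel1 N h0 h1 σ y xs {i + 1} =
      4 * h0 * h1 / σ ^ 2 * (2 * (if xs i = xs (i + 1) then (1 : ℝ) else 0) - 1) := by
  simp only [Rel1, Lam1]
  have hrw :
      ∀ (A B C D : ℕ → ℝ), (∑ j ∈ Finset.Icc 1 N, A j) - (∑ j ∈ Finset.Icc 1 N, B j)
        - ((∑ j ∈ Finset.Icc 1 N, A j) - (∑ j ∈ Finset.Icc 1 N, C j))
        - ((∑ j ∈ Finset.Icc 1 N, A j) - (∑ j ∈ Finset.Icc 1 N, D j))
        = ∑ j ∈ Finset.Icc 1 N, (C j + D j - A j - B j) := by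
    intro A B C D
    rw [Finset.sum_sub_distrib, Finset.sum_sub_distrib, Finset.sum_add_distrib]
    ring
  rw [hrw]
  rw [Finset.sum_eq_single_of_mem (i + 1) (by simp [Finset.mem_Icc]; omega)]
  · -- main term at j = i+1
    have e1 : i + 1 - 1 = i := by omega
    have e2 : i + 1 ≠ i := by omega
    simp only [flipSeq, e1, Finset.mem_insert, Finset.mem_singleton, e2,
      if_true, if_false, eq_self_iff_true, or_true, true_or, or_false]
    rw [if_neg (by omega : ¬ (i = i + 1))]
    rw [gaussLL_eq h0 h1 σ hσ, gaussLL_eq h0 h1 σ hσ, gaussLL_eq h0 h1 σ hσ,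
      gaussLL_eq h0 h1 σ hσ]
    have hσ2 : σ ^ 2 ≠ 0 := by positivity
    cases hxi : xs i <;> cases hxj : xs (i + 1) <;>
      simp [bval] <;> field_simp <;> ring
  · intro j hj hne
    simp only [Finset.mem_Icc] at hj
    rcases eq_or_ne j i with rfl | hji
    · have e1 : j - 1 ≠ j := by omega
      have e2 : j - 1 ≠ j + 1 := by omega
      simp only [flipSeq, Finset.mem_insert, Finset.mem_singleton, e1, e2,
        if_false, or_self, eq_self_iff_true, true_or, if_true,
        if_neg (show ¬(j = j + 1) by omega)]
      ring
    · rcases eq_or_ne j (i + 2) with rfl | hj2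
      · have e1 : i + 2 - 1 = i + 1 := by omega
        simp only [flipSeq, e1]
        rw [if_pos (show i + 1 ∈ ({i, i+1}:Finset ℕ) by simp),
          if_neg (show i + 2 ∉ ({i, i+1}:Finset ℕ) by simp),
          if_neg (show i + 1 ∉ ({i}:Finset ℕ) by simp),
          if_neg (show i + 2 ∉ ({i}:Finset ℕ) by simp),
          if_pos (show i + 1 ∈ ({i+1}:Finset ℕ) by simp),
          if_neg (show i + 2 ∉ ({i+1}:Finset ℕ) by simp)]
        ring
      · have p1 : j - 1 ∉ ({i, i+1}:Finset ℕ) := by simp only [Finset.mem_insert, Finset.mem_singleton]; omega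
        have p2 : j ∉ ({i, i+1}:Finset ℕ) := by simp only [Finset.mem_insert, Finset.mem_singleton]; omega
        have p3 : j - 1 ∉ ({i}:Finset ℕ) := by simp only [Finset.mem_insert, Finset.mem_singleton]; omega
        have p4 : j ∉ ({i}:Finset ℕ) := by simp only [Finset.mem_insert, Finset.mem_singleton]; omega
        have p5 : j - 1 ∉ ({i+1}:Finset ℕ) := by simp only [Finset.mem_insert, Finset.mem_singleton]; omega
        have p6 : j ∉ ({i+1}:Finset ℕ) := by simp only [Finset.mem_insert, Finset.mem_singleton]; omega
        simp only [flipSeq, if_neg p1, if_neg p2, if_neg p3, if_neg p4,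
          if_neg p5, if_neg p6]
        ring
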